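/- arXiv:1905.09246 — 5 statements merged into one kernel-verified Lean document; each statement's English description precedes it below -/
import Mathlib

section
/- Let q ≥ 2 and n be an even positive integer, and let s be an integer with s ≥ n/2 + 1 and s ≤ n. Then for any integer l with 1 ≤ l ≤ q^{n/2}, we have ([s]_q - l + 1) / [n-s+1]_q ≥ 1, where [m]_q = (q^m - 1)/(q - 1). -/
/-- The q-analog `[m]_q = (q^m - 1)/(q - 1)`. -/
def qAn (q : ℚ) (m : ℕ) : ℚ := (q ^ m - 1) / (q - 1)

theorem stmt_1 (q n s l : ℕ) (hq : 2 ≤ q) (hn : Even n) (hn0 : 0 < n)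
    (hs1 : n / 2 + 1 ≤ s) (hs2 : s ≤ n) (hl1 : 1 ≤ l) (hl2 : l ≤ q ^ (n / 2)) :
    1 ≤ (qAn (q : ℚ) s - (l : ℚ) + 1) / qAn (q : ℚ) (n - s + 1) := by
  obtain ⟨m, hm⟩ := hn
  have hQ : (2:ℚ) ≤ (q:ℚ) := by exact_mod_cast hq
  have hQ1 : (1:ℚ) ≤ (q:ℚ) := by linarith
  have h1 : n - s + 1 ≤ n / 2 := by omega
  have h2 : n / 2 + 1 ≤ s := hs1
  have p1 : (q:ℚ) ^ (n - s + 1) ≤ (q:ℚ) ^ (n / 2) := pow_le_pow_right₀ hQ1 h1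
  have p2 : (q:ℚ) ^ (n / 2 + 1) ≤ (q:ℚ) ^ s := pow_le_pow_right₀ hQ1 h2
  have hl : (l:ℚ) ≤ (q:ℚ) ^ (n / 2) := by exact_mod_cast hl2
  have hl1' : (1:ℚ) ≤ (l:ℚ) := by exact_mod_cast hl1
  have hpow : (1:ℚ) < (q:ℚ) ^ (n - s + 1) :=
    one_lt_pow₀ (by linarith) (by omega)
  have hden : 0 < qAn (q:ℚ) (n - s + 1) := by
    unfold qAn
    apply div_pos (by linarith) (by linarith)
  rw [le_div_iff₀ hden, one_mul]
  unfold qAn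
  rw [div_le_iff₀ (by linarith : (0:ℚ) < (q:ℚ) - 1)]
  have key : ((q:ℚ) ^ (n / 2 + 1)) = (q:ℚ) ^ (n / 2) * q := pow_succ _ _
  have hc : ((q:ℚ) ^ s - 1) / ((q:ℚ) - 1) * ((q:ℚ) - 1) = (q:ℚ) ^ s - 1 :=
    div_mul_cancel₀ _ (by linarith)
  nlinarith [p1, p2, hl, hl1', hQ, mul_nonneg (sub_nonneg.2 hl) (by linarith : (0:ℚ) ≤ (q:ℚ) - 1)]
end

section
/- Let q ≥ 2 and n be an odd integer, and let s be an integer with s ≥ (n+3)/2 and s ≤ n. Then for any integer l with 1 ≤ l ≤ q, we have [s]_q - (l-1)·[s-1]_q ≥ [n-s+1]_q, where [m]_q = (q^m - 1)/(q-1). -/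
theorem stmt_2 (q n s l : ℕ) (hq : 2 ≤ q) (hn : Odd n)
    (hs1 : (n + 3) / 2 ≤ s) (hs2 : s ≤ n) (hl1 : 1 ≤ l) (hl2 : l ≤ q) :
    qAn (q : ℚ) (n - s + 1) ≤ qAn (q : ℚ) s - ((l : ℚ) - 1) * qAn (q : ℚ) (s - 1) := by
  obtain ⟨k, hk⟩ := hn
  have hQ : (2:ℚ) ≤ (q:ℚ) := by exact_mod_cast hq
  have hQ1 : (0:ℚ) < (q:ℚ) - 1 := by linarith
  have hexp : n - s + 1 ≤ s - 1 := by omega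
  have hs1' : 1 ≤ s := by omega
  have hpow : (q:ℚ) ^ (n - s + 1) ≤ (q:ℚ) ^ (s - 1) :=
    pow_le_pow_right₀ (by linarith) hexp
  have h1 : (1:ℚ) ≤ (q:ℚ) ^ (s - 1) := one_le_pow₀ (by linarith)
  have hqAnpos : 0 ≤ qAn (q:ℚ) (s - 1) := by
    unfold qAn
    exact div_nonneg (by linarith) (le_of_lt hQ1)
  have hl : ((l:ℚ) - 1) ≤ (q:ℚ) - 1 := by
    have : (l:ℚ) ≤ (q:ℚ) := by exact_mod_cast hl2
    linarith
  have step1 : qAn (q:ℚ) s - ((q:ℚ) - 1) * qAn (q:ℚ) (s - 1)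
      ≤ qAn (q:ℚ) s - ((l:ℚ) - 1) * qAn (q:ℚ) (s - 1) := by
    nlinarith [mul_le_mul_of_nonneg_right hl hqAnpos]
  refine le_trans ?_ step1
  unfold qAn
  have hss : (q:ℚ) ^ s = (q:ℚ) ^ (s - 1) * (q:ℚ) := by
    rw [← pow_succ]
    congr 1
    omega
  have key : (q:ℚ) ^ (n - s + 1) ≤ (q:ℚ) ^ (s - 1) + (q:ℚ) - 1 := by linarith
  have hexpand : ((q:ℚ) - 1) * ((q ^ (s-1) - 1) / ((q:ℚ) - 1)) = (q:ℚ)^(s-1) - 1 := by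
    field_simp
  rw [hexpand, div_sub' (ne_of_gt hQ1), div_le_div_iff₀ hQ1 hQ1]
  nlinarith [hQ1, key, hss]
end

section
/- Let V be an n-dimensional vector space over a finite field F_q with n even, and let k, l be integers with 2 ≤ k, l ≤ q^{n/2}. Then the maximum size of a family of subspaces of V containing no subposet V_k (one subspace properly below k incomparable-or-not subspaces all above it) and no subposet Λ_l equals the Gaussian binomial coefficient [n choose n/2]_q, attained by the family of all (n/2)-dimensional subspaces. -/
open Finset Module

namespace Stmt4Aux

/-! ### Arithmetic -/

lemma geom_mul {q : ℕ} (hq : 1 ≤ q) (a : ℕ) :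
    (∑ i ∈ range a, q ^ i) * (q - 1) = q ^ a - 1 := by
  induction a with
  | zero => simp
  | succ a ih =>
    obtain ⟨c, rfl⟩ : ∃ c, q = c + 1 := ⟨q - 1, by omega⟩
    rw [sum_range_succ, add_mul, ih]
    simp only [Nat.add_sub_cancel]
    have h1 : 1 ≤ (c + 1) ^ a := Nat.one_le_pow _ _ (by omega)
    have hp : (c + 1) ^ (a + 1) = (c + 1) ^ a * (c + 1) := pow_succ _ _
    have hm : (c + 1) ^ a * (c + 1) = (c + 1) ^ a * c + (c + 1) ^ a := by ring
    omega

lemma L_split {q m a b : ℕ} (hb : b ≤ m) (ha : m < a) :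
    (∑ i ∈ range b, q ^ i) + q ^ m ≤ ∑ i ∈ range a, q ^ i := by
  have h1 : range b ⊆ range a := range_subset_range.mpr (by omega)
  have h2 : (∑ i ∈ range a \ range b, q ^ i) + ∑ i ∈ range b, q ^ i
      = ∑ i ∈ range a, q ^ i := Finset.sum_sdiff (f := fun i => q ^ i) h1
  have hm : m ∈ range a \ range b := by simp only [mem_sdiff, mem_range]; omega
  have h3 : q ^ m ≤ ∑ i ∈ range a \ range b, q ^ i :=
    Finset.single_le_sum (fun i _ => Nat.zero_le _) hm
  omega

/-! ### Counting lines and hyperplanes -/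

variable {𝔽 : Type*} [Field 𝔽] [Fintype 𝔽]

section Lines
variable {M : Type*} [AddCommGroup M] [Module 𝔽 M] [Finite M]

lemma finitedim_of_finite : FiniteDimensional 𝔽 M := by
  have : Module.Finite 𝔽 M := (Module.finite_iff_finite (R := 𝔽) (M := M)).mpr ‹Finite M›
  infer_instance

lemma nlines_eq :
    Nat.card {L : Submodule 𝔽 M // finrank 𝔽 L = 1}
      = ∑ i ∈ range (finrank 𝔽 M), Fintype.card 𝔽 ^ i := by
  classical
  haveI : FiniteDimensional 𝔽 M := finitedim_of_finite
  cases nonempty_fintype M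
  haveI : Finite (Submodule 𝔽 M) :=
    Finite.of_injective (fun p : Submodule 𝔽 M => (p : Set M)) (SetLike.coe_injective)
  haveI : Fintype (Submodule 𝔽 M) := Fintype.ofFinite _
  set q := Fintype.card 𝔽 with hq
  have hq2 : 2 ≤ q := Fintype.one_lt_card
  set a := finrank 𝔽 M with ha
  have hcard : Fintype.card M = q ^ a := card_eq_pow_finrank
  set s : Finset M := univ.filter (fun v => v ≠ 0) with hs
  set t : Finset (Submodule 𝔽 M) := univ.filter (fun L => finrank 𝔽 L = 1) with ht
  have hscard : s.card = q ^ a - 1 := by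
    rw [hs, filter_ne', card_erase_of_mem (mem_univ _), card_univ, hcard]
  have hfib : s.card = ∑ L ∈ t, (s.filter (fun v => Submodule.span 𝔽 {v} = L)).card := by
    apply card_eq_sum_card_fiberwise
    intro v hv
    rw [ht, mem_coe, mem_filter]
    exact ⟨mem_univ _, finrank_span_singleton (by simpa [hs] using hv)⟩
  have hfibcard : ∀ L ∈ t, (s.filter (fun v => Submodule.span 𝔽 {v} = L)).card = q - 1 := by
    intro L hL
    rw [ht, mem_filter] at hL
    have hLrank := hL.2
    have heq : s.filter (fun v => Submodule.span 𝔽 {v} = L)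
        = (univ.filter (fun v => v ∈ L)).erase 0 := by
      ext v
      simp only [hs, mem_filter, filter_filter, mem_erase, mem_univ, true_and, ne_eq]
      constructor
      · rintro ⟨hv0, hsp⟩
        exact ⟨hv0, hsp ▸ Submodule.mem_span_singleton_self v⟩
      · rintro ⟨hv0, hvL⟩
        refine ⟨hv0, ?_⟩
        have hle : Submodule.span 𝔽 {v} ≤ L := by
          rw [Submodule.span_le, Set.singleton_subset_iff]; exact hvL
        exact Submodule.eq_of_le_of_finrank_le hle
          (by rw [finrank_span_singleton hv0, hLrank])
    rw [heq, card_erase_of_mem (by simp [Submodule.zero_mem])]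
    have h1 : (univ.filter (fun v => v ∈ L)).card = Fintype.card L := (Fintype.card_subtype _).symm
    have h2 : Fintype.card L = q ^ finrank 𝔽 L := card_eq_pow_finrank
    rw [h1, h2, hLrank, pow_one]
  have hsum : s.card = t.card * (q - 1) := by
    rw [hfib, Finset.sum_congr rfl hfibcard, Finset.sum_const, smul_eq_mul]
  have hgeom := geom_mul (by omega : 1 ≤ q) a
  have htcard : t.card = ∑ i ∈ range a, q ^ i := by
    have h1 : t.card * (q - 1) = (∑ i ∈ range a, q ^ i) * (q - 1) := by
      rw [← hsum, hscard, hgeom]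
    exact Nat.eq_of_mul_eq_mul_right (by omega) h1
  rw [Nat.card_eq_fintype_card, Fintype.card_subtype, ← ht, htcard]

end Lines

section Hyp
variable {M : Type*} [AddCommGroup M] [Module 𝔽 M] [Finite M]

noncomputable def hypEquiv [FiniteDimensional 𝔽 M] :
    {H : Submodule 𝔽 M // finrank 𝔽 H + 1 = finrank 𝔽 M}
      ≃ {L : Submodule 𝔽 (Module.Dual 𝔽 M) // finrank 𝔽 L = 1} where
  toFun H := ⟨H.1.dualAnnihilator, by
    have h2 : finrank 𝔽 (Submodule.dualAnnihilator H.1) = finrank 𝔽 (M ⧸ H.1) :=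
      (LinearEquiv.finrank_eq (Subspace.quotEquivAnnihilator H.1)).symm
    have h3 := Submodule.finrank_quotient_add_finrank H.1
    have := H.2
    omega⟩
  invFun L := ⟨L.1.dualCoannihilator, by
    have := Subspace.finrank_add_finrank_dualCoannihilator_eq L.1
    have := L.2
    omega⟩
  left_inv H := Subtype.ext Subspace.dualAnnihilator_dualCoannihilator_eq
  right_inv L := Subtype.ext <| by
    have hle := Submodule.le_dualCoannihilator_dualAnnihilator L.1
    have h1 := Subspace.finrank_add_finrank_dualCoannihilator_eq L.1
    have h2 : finrank 𝔽 (Submodule.dualAnnihilator L.1.dualCoannihilator)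
        = finrank 𝔽 (M ⧸ L.1.dualCoannihilator) :=
      (LinearEquiv.finrank_eq (Subspace.quotEquivAnnihilator L.1.dualCoannihilator)).symm
    have h3 := Submodule.finrank_quotient_add_finrank L.1.dualCoannihilator
    have := L.2
    exact (Submodule.eq_of_le_of_finrank_le hle (by omega)).symm

lemma nhyp_eq :
    Nat.card {H : Submodule 𝔽 M // finrank 𝔽 H + 1 = finrank 𝔽 M}
      = ∑ i ∈ range (finrank 𝔽 M), Fintype.card 𝔽 ^ i := by
  haveI : FiniteDimensional 𝔽 M := finitedim_of_finite
  haveI : Finite (Module.Dual 𝔽 M) := by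
    cases nonempty_fintype M
    exact Finite.of_injective (fun f : Module.Dual 𝔽 M => (f : M → 𝔽)) DFunLike.coe_injective
  rw [Nat.card_congr (hypEquiv (𝔽 := 𝔽) (M := M)),
    nlines_eq (𝔽 := 𝔽) (M := Module.Dual 𝔽 M)]
  rw [Subspace.dual_finrank_eq]

end Hyp

/-! ### Covers and hyperplanes inside the ambient space -/

section Ambient
variable {V : Type*} [AddCommGroup V] [Module 𝔽 V] [FiniteDimensional 𝔽 V]

lemma rank_map_mkQ (U W : Submodule 𝔽 V) (h : U ≤ W) :
    finrank 𝔽 (Submodule.map U.mkQ W) + finrank 𝔽 U = finrank 𝔽 W := by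
  have hr := LinearMap.finrank_range_add_finrank_ker (U.mkQ.comp W.subtype)
  have h1 : LinearMap.range (U.mkQ.comp W.subtype) = Submodule.map U.mkQ W := by
    rw [LinearMap.range_comp, Submodule.range_subtype]
  have h2 : LinearMap.ker (U.mkQ.comp W.subtype) = Submodule.comap W.subtype U := by
    rw [LinearMap.ker_comp, Submodule.ker_mkQ]
  have h3 : finrank 𝔽 (Submodule.comap W.subtype U) = finrank 𝔽 U :=
    LinearEquiv.finrank_eq (Submodule.comapSubtypeEquivOfLe h)
  rw [h1, h2, h3] at hr
  exact hr

noncomputable def coverEquiv (U : Submodule 𝔽 V) :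
    {W : Submodule 𝔽 V // U < W ∧ finrank 𝔽 W = finrank 𝔽 U + 1}
      ≃ {L : Submodule 𝔽 (V ⧸ U) // finrank 𝔽 L = 1} where
  toFun W := ⟨Submodule.map U.mkQ W.1, by
    have := rank_map_mkQ U W.1 W.2.1.le
    have := W.2.2
    omega⟩
  invFun L := by
    have hle : U ≤ Submodule.comap U.mkQ L.1 := by
      intro x hx
      have : U.mkQ x = 0 := (Submodule.Quotient.mk_eq_zero U).mpr hx
      simp [Submodule.mem_comap, this]
    have hmap : Submodule.map U.mkQ (Submodule.comap U.mkQ L.1) = L.1 :=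
      Submodule.map_comap_eq_of_surjective (Submodule.mkQ_surjective U) _
    have hrk := rank_map_mkQ U _ hle
    rw [hmap] at hrk
    have hL := L.2
    refine ⟨Submodule.comap U.mkQ L.1, lt_of_le_of_ne hle ?_, by omega⟩
    intro hEq
    rw [← hEq] at hrk
    omega
  left_inv W := Subtype.ext <| by
    have h := Submodule.comap_map_mkQ U W.1
    simp only [h]
    exact sup_eq_right.mpr W.2.1.le
  right_inv L := Subtype.ext <|
    Submodule.map_comap_eq_of_surjective (Submodule.mkQ_surjective U) _

noncomputable def belowEquiv (W : Submodule 𝔽 V) :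
    {F : Submodule 𝔽 V // F < W ∧ finrank 𝔽 F + 1 = finrank 𝔽 W}
      ≃ {p : Submodule 𝔽 ↥W // finrank 𝔽 p + 1 = finrank 𝔽 ↥W} where
  toFun F := ⟨Submodule.comap W.subtype F.1, by
    have h3 : finrank 𝔽 (Submodule.comap W.subtype F.1) = finrank 𝔽 F.1 :=
      LinearEquiv.finrank_eq (Submodule.comapSubtypeEquivOfLe F.2.1.le)
    rw [h3]
    exact F.2.2⟩
  invFun p := by
    have hle : Submodule.map W.subtype p.1 ≤ W := Submodule.map_subtype_le W p.1
    have hrk : finrank 𝔽 (Submodule.map W.subtype p.1) = finrank 𝔽 p.1 :=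
      (LinearEquiv.finrank_eq (Submodule.equivMapOfInjective W.subtype
        (Submodule.injective_subtype W) p.1)).symm
    refine ⟨Submodule.map W.subtype p.1, lt_of_le_of_ne hle ?_, by
      rw [hrk]; exact p.2⟩
    intro hEq
    have := p.2
    rw [hEq] at hrk
    omega
  left_inv F := Subtype.ext <| by
    have h := Submodule.map_comap_subtype W F.1
    simp only [h]
    exact inf_eq_right.mpr F.2.1.le
  right_inv p := Subtype.ext <|
    Submodule.comap_map_eq_of_injective (Submodule.injective_subtype W) p.1

variable [Finite V]

lemma card_covers (U : Submodule 𝔽 V) :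
    Nat.card {W : Submodule 𝔽 V // U < W ∧ finrank 𝔽 W = finrank 𝔽 U + 1}
      = ∑ i ∈ range (finrank 𝔽 V - finrank 𝔽 U), Fintype.card 𝔽 ^ i := by
  haveI : Finite (V ⧸ U) := Finite.of_surjective _ (Submodule.mkQ_surjective U)
  rw [Nat.card_congr (coverEquiv U), nlines_eq (𝔽 := 𝔽) (M := V ⧸ U)]
  have h : finrank 𝔽 (V ⧸ U) = finrank 𝔽 V - finrank 𝔽 U := by
    have h1 := Submodule.finrank_quotient_add_finrank U
    omega
  rw [h]

lemma card_below (W : Submodule 𝔽 V) :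
    Nat.card {F : Submodule 𝔽 V // F < W ∧ finrank 𝔽 F + 1 = finrank 𝔽 W}
      = ∑ i ∈ range (finrank 𝔽 W), Fintype.card 𝔽 ^ i := by
  rw [Nat.card_congr (belowEquiv W), nhyp_eq]

end Ambient

/-! ### Swap lemma -/
section Swap

variable {α : Type*} [DecidableEq α]

def swapFam (𝓕 E : Finset α) (φ : α → α) : Finset α := (𝓕 \ E) ∪ E.image φ

variable {r : α → α → Prop} [DecidableRel r]

variable {𝓕 E : Finset α} {φ : α → α}


theorem swap_main (hE : E ⊆ 𝓕)
    (hlt : ∀ F ∈ E, r F (φ F)) (hnot : ∀ F ∈ E, φ F ∉ 𝓕)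
    (hinj : Set.InjOn φ E)
    (h4 : ∀ z ∈ 𝓕, z ∉ E → ∀ F ∈ E, ¬ r z (φ F))
    (h5 : ∀ F ∈ E, ∀ F' ∈ E, ¬ r (φ F) (φ F'))
    (htr : Transitive r) :
    (swapFam 𝓕 E φ).card = 𝓕.card ∧
    (∀ K, (∀ z ∈ 𝓕, (𝓕.filter (fun A => r z A)).card ≤ K) →
      ∀ z ∈ swapFam 𝓕 E φ, ((swapFam 𝓕 E φ).filter (fun A => r z A)).card ≤ K) ∧
    (∀ K, (∀ z ∈ 𝓕, (𝓕.filter (fun A => r A z)).card ≤ K) →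
      ∀ z ∈ swapFam 𝓕 E φ, ((swapFam 𝓕 E φ).filter (fun A => r A z)).card ≤ K) := by
  have hdisj : Disjoint (𝓕 \ E) (E.image φ) := by
    rw [Finset.disjoint_right]
    intro a ha
    obtain ⟨F, hF, rfl⟩ := Finset.mem_image.mp ha
    intro hmem
    exact hnot F hF (Finset.mem_sdiff.mp hmem).1
  have hmemchar : ∀ z ∈ swapFam 𝓕 E φ, (z ∈ 𝓕 ∧ z ∉ E) ∨ ∃ F ∈ E, z = φ F := by
    intro z hzmem
    rcases Finset.mem_union.mp hzmem with h | h
    · exact Or.inl (by simpa [Finset.mem_sdiff] using h)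
    · obtain ⟨F, hF, rfl⟩ := Finset.mem_image.mp h
      exact Or.inr ⟨F, hF, rfl⟩
  refine ⟨?_, ?_, ?_⟩
  · rw [swapFam, Finset.card_union_of_disjoint hdisj, Finset.card_sdiff_of_subset hE,
      Finset.card_image_of_injOn hinj]
    have := Finset.card_le_card hE
    omega
  · -- up bounds
    intro K hK z hzmem
    rcases hmemchar z hzmem with ⟨hz𝓕, hzE⟩ | ⟨F, hF, rfl⟩
    · refine le_trans (Finset.card_le_card ?_) (hK z hz𝓕)
      intro A hA
      rw [Finset.mem_filter] at hA ⊢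
      obtain ⟨hA1, hA2⟩ := hA
      rcases hmemchar A hA1 with ⟨hAF, _⟩ | ⟨G, hG, rfl⟩
      · exact ⟨hAF, hA2⟩
      · exact absurd hA2 (h4 z hz𝓕 hzE G hG)
    · refine le_trans (Finset.card_le_card ?_) (hK F (hE hF))
      intro A hA
      rw [Finset.mem_filter] at hA ⊢
      obtain ⟨hA1, hA2⟩ := hA
      rcases hmemchar A hA1 with ⟨hAF, _⟩ | ⟨G, hG, rfl⟩
      · exact ⟨hAF, htr (hlt F hF) hA2⟩
      · exact absurd hA2 (h5 F hF G hG)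
  · -- down bounds
    intro K hK z hzmem
    rcases hmemchar z hzmem with ⟨hz𝓕, hzE⟩ | ⟨F, hF, rfl⟩
    · have hsplit : (swapFam 𝓕 E φ).filter (fun A => r A z)
          = ((𝓕 \ E).filter (fun A => r A z)) ∪ ((E.image φ).filter (fun A => r A z)) :=
        Finset.filter_union _ _ _
      have himg : ((E.image φ).filter (fun A => r A z))
          = (E.filter (fun F => r (φ F) z)).image φ := by
        ext A
        simp only [Finset.mem_filter, Finset.mem_image]
        constructor
        · rintro ⟨⟨F, hF, rfl⟩, hr⟩; exact ⟨F, ⟨hF, hr⟩, rfl⟩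
        · rintro ⟨F, ⟨hF, hr⟩, rfl⟩; exact ⟨⟨F, hF, rfl⟩, hr⟩
      have hc2 : ((E.image φ).filter (fun A => r A z)).card
          = (E.filter (fun F => r (φ F) z)).card := by
        rw [himg]
        exact Finset.card_image_of_injOn (hinj.mono (by
          intro x hx; exact (Finset.mem_filter.mp hx).1))
      have hc3 : (E.filter (fun F => r (φ F) z)).card ≤ (E.filter (fun F => r F z)).card := by
        apply Finset.card_le_card
        intro F hFm
        rw [Finset.mem_filter] at hFm ⊢
        exact ⟨hFm.1, htr (hlt F hFm.1) hFm.2⟩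
      have hunion : ((𝓕 \ E).filter (fun A => r A z)) ∪ (E.filter (fun F => r F z))
          ⊆ 𝓕.filter (fun A => r A z) := by
        intro A hA
        rcases Finset.mem_union.mp hA with h | h
        · rw [Finset.mem_filter] at h ⊢
          exact ⟨(Finset.mem_sdiff.mp h.1).1, h.2⟩
        · rw [Finset.mem_filter] at h ⊢
          exact ⟨hE h.1, h.2⟩
      have hdisj2 : Disjoint ((𝓕 \ E).filter (fun A => r A z)) (E.filter (fun F => r F z)) := by
        refine Finset.disjoint_left.mpr ?_
        intro a ha hb
        exact (Finset.mem_sdiff.mp (Finset.mem_filter.mp ha).1).2 (Finset.mem_filter.mp hb).1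
      calc ((swapFam 𝓕 E φ).filter (fun A => r A z)).card
          ≤ ((𝓕 \ E).filter (fun A => r A z)).card
            + ((E.image φ).filter (fun A => r A z)).card := by
            rw [hsplit]; exact Finset.card_union_le _ _
        _ ≤ ((𝓕 \ E).filter (fun A => r A z)).card + (E.filter (fun F => r F z)).card := by
            rw [hc2]; omega
        _ = (((𝓕 \ E).filter (fun A => r A z)) ∪ (E.filter (fun F => r F z))).card :=
            (Finset.card_union_of_disjoint hdisj2).symm
        _ ≤ (𝓕.filter (fun A => r A z)).card := Finset.card_le_card hunion
        _ ≤ K := hK z hz𝓕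
    · have : (swapFam 𝓕 E φ).filter (fun A => r A (φ F)) = ∅ := by
        rw [Finset.filter_eq_empty_iff]
        intro A hA
        rcases hmemchar A hA with ⟨hAF, hAE⟩ | ⟨G, hG, rfl⟩
        · exact h4 A hAF hAE F hF
        · exact h5 G hG F hF
      rw [this]
      simp

end Swap

/-! ### Hall helper -/


theorem hall_of_degrees {ι α : Type*} [DecidableEq α] (t : ι → Finset α) (ρ : ℕ)
    (hl : ∀ x : ι, ρ + 1 ≤ (t x).card)
    (hr : ∀ (s : Finset ι) (W : α), W ∈ s.biUnion t →
      (s.filter (fun x => W ∈ t x)).card ≤ ρ) :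
    ∃ f : ι → α, Function.Injective f ∧ ∀ x, f x ∈ t x := by
  classical
  rw [← Finset.all_card_le_biUnion_card_iff_exists_injective]
  intro s
  set B := s.biUnion t with hB
  have hsub : ∀ x ∈ s, t x ⊆ B := fun x hx => Finset.subset_biUnion_of_mem t hx
  have h1 : ∀ x ∈ s, (t x).card = ∑ W ∈ B, if W ∈ t x then 1 else 0 := by
    intro x hx
    rw [← Finset.card_filter]
    congr 1
    rw [Finset.filter_mem_eq_inter, Finset.inter_eq_right.mpr (hsub x hx)]
  have h2 : ∑ x ∈ s, (t x).card = ∑ W ∈ B, (s.filter (fun x => W ∈ t x)).card := by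
    rw [Finset.sum_congr rfl h1, Finset.sum_comm]
    exact Finset.sum_congr rfl (fun W _ => (Finset.card_filter _ _).symm)
  have h3 : (ρ + 1) * s.card ≤ ∑ x ∈ s, (t x).card := by
    rw [mul_comm, ← smul_eq_mul]
    exact Finset.card_nsmul_le_sum s _ _ (fun x _ => hl x)
  have h4 : ∑ W ∈ B, (s.filter (fun x => W ∈ t x)).card ≤ ρ * B.card := by
    rw [mul_comm, ← smul_eq_mul]
    exact Finset.sum_le_card_nsmul B _ _ (fun W hW => hr s W hW)
  by_contra hcon
  push_neg at hcon
  have h5 : ρ * B.card ≤ ρ * s.card := Nat.mul_le_mul_left ρ (le_of_lt hcon)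
  have h6 : (ρ + 1) * s.card ≤ ρ * s.card := by omega
  have h7 : (ρ + 1) * s.card = ρ * s.card + s.card := by ring
  omega



/-! ### The push steps -/

section Push
open scoped Classical

variable {V : Type*} [AddCommGroup V] [Module 𝔽 V] [FiniteDimensional 𝔽 V]

/-- `𝓕` has all up-degrees `< k` and all down-degrees `< l`. -/
def Good (k l : ℕ) (𝓕 : Finset (Submodule 𝔽 V)) : Prop :=
  (∀ z ∈ 𝓕, (𝓕.filter (fun A => z < A)).card + 1 ≤ k) ∧
  (∀ z ∈ 𝓕, (𝓕.filter (fun A => A < z)).card + 1 ≤ l)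

theorem push_up {k l q n m : ℕ} (hq : Fintype.card 𝔽 = q) (hn : finrank 𝔽 V = n)
    (hnm : n = m + m) (hk : k ≤ q ^ m)
    {𝓕 : Finset (Submodule 𝔽 V)} (hGood : Good k l 𝓕)
    (hlem : ∀ z ∈ 𝓕, finrank 𝔽 z ≤ m) {z₀ : Submodule 𝔽 V} (hz₀ : z₀ ∈ 𝓕)
    (hz₀m : finrank 𝔽 z₀ < m) :
    ∃ 𝓖 : Finset (Submodule 𝔽 V), Good k l 𝓖 ∧ 𝓖.card = 𝓕.card ∧
      (∀ z ∈ 𝓖, finrank 𝔽 z ≤ m) ∧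
      (∑ z ∈ 𝓖, (m - finrank 𝔽 z)) < ∑ z ∈ 𝓕, (m - finrank 𝔽 z) := by
  haveI : Finite V := Module.finite_of_finite 𝔽
  haveI : Finite (Submodule 𝔽 V) :=
    Finite.of_injective (fun p : Submodule 𝔽 V => (p : Set V)) SetLike.coe_injective
  haveI : Fintype (Submodule 𝔽 V) := Fintype.ofFinite _
  obtain ⟨b, hb, hmin⟩ := 𝓕.exists_min_image (fun z : Submodule 𝔽 V => finrank 𝔽 z) ⟨z₀, hz₀⟩
  set d := finrank 𝔽 b with hd
  have hdm : d < m := lt_of_le_of_lt (hmin z₀ hz₀) hz₀m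
  set E := 𝓕.filter (fun z : Submodule 𝔽 V => finrank 𝔽 z = d) with hE
  have hEsub : E ⊆ 𝓕 := filter_subset _ _
  have hbE : b ∈ E := mem_filter.mpr ⟨hb, rfl⟩
  have hkpos : 1 ≤ k := by have := hGood.1 b hb; omega
  set t : Submodule 𝔽 V → Finset (Submodule 𝔽 V) :=
    fun F => (univ.filter (fun W : Submodule 𝔽 V => F < W ∧ finrank 𝔽 W = d + 1)).filter (fun W : Submodule 𝔽 V => W ∉ 𝓕)
    with ht
  -- number of covers
  have hcov : ∀ F ∈ E, (univ.filter (fun W : Submodule 𝔽 V => F < W ∧ finrank 𝔽 W = d + 1)).card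
      = ∑ i ∈ range (n - d), q ^ i := by
    intro F hF
    have hFd : finrank 𝔽 F = d := (mem_filter.mp hF).2
    have h1 := card_covers (𝔽 := 𝔽) F
    simp only [hFd, hn, hq] at h1
    rw [Nat.card_eq_fintype_card, Fintype.card_subtype] at h1
    exact h1
  -- covers inside 𝓕 are few
  have hupk : ∀ F ∈ E, ((univ.filter (fun W : Submodule 𝔽 V => F < W ∧ finrank 𝔽 W = d + 1)).filter
      (fun W : Submodule 𝔽 V => W ∈ 𝓕)).card + 1 ≤ k := by
    intro F hF
    have hsub2 : (univ.filter (fun W : Submodule 𝔽 V => F < W ∧ finrank 𝔽 W = d + 1)).filter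
        (fun W : Submodule 𝔽 V => W ∈ 𝓕) ⊆ 𝓕.filter (fun A : Submodule 𝔽 V => F < A) := by
      intro W hW
      simp only [mem_filter, mem_univ, true_and] at hW ⊢
      exact ⟨hW.2, hW.1.1⟩
    exact le_trans (Nat.add_le_add_right (card_le_card hsub2) 1) (hGood.1 F (hEsub hF))
  set ρ := ∑ i ∈ range (d + 1), q ^ i with hρ
  -- left degree bound
  have htcard : ∀ F ∈ E, ρ + 1 ≤ (t F).card := by
    intro F hF
    have hsplit := card_filter_add_card_filter_not
      (s := univ.filter (fun W : Submodule 𝔽 V => F < W ∧ finrank 𝔽 W = d + 1)) (p := fun W => W ∈ 𝓕)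
    have hL := L_split (q := q) (m := m) (b := d + 1) (a := n - d) (by omega) (by omega)
    have h2 := hupk F hF
    have h3 := hcov F hF
    have ht4 : (t F).card = ((univ.filter (fun W : Submodule 𝔽 V => F < W ∧ finrank 𝔽 W = d + 1)).filter
        (fun W => ¬ W ∈ 𝓕)).card := rfl
    omega
  -- right degree bound and Hall
  have hHall : ∃ f : {x // x ∈ E} → Submodule 𝔽 V,
      Function.Injective f ∧ ∀ x, f x ∈ t x.1 := by
    apply hall_of_degrees (t := fun x : {x // x ∈ E} => t x.1) (ρ := ρ)
    · intro x; exact htcard x.1 x.2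
    · intro s W hW
      obtain ⟨x, hxs, hxW⟩ := mem_biUnion.mp hW
      have hWrk : finrank 𝔽 W = d + 1 := (mem_filter.mp (mem_filter.mp hxW).1).2.2
      have hinj : (s.filter (fun x => W ∈ t x.1)).card
          ≤ (univ.filter (fun F : Submodule 𝔽 V => F < W ∧ finrank 𝔽 F + 1 = finrank 𝔽 W)).card := by
        apply card_le_card_of_injOn (fun x => x.1)
        · intro y hy
          simp only [mem_coe, mem_filter, mem_univ, true_and]
          have hyt := (mem_filter.mp hy).2
          have h1 := (mem_filter.mp (mem_filter.mp hyt).1).2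
          have h2 : finrank 𝔽 y.1 = d := (mem_filter.mp y.2).2
          exact ⟨h1.1, by omega⟩
        · intro a _ c _ hac; exact Subtype.ext hac
      have hbelow : (univ.filter
          (fun F : Submodule 𝔽 V => F < W ∧ finrank 𝔽 F + 1 = finrank 𝔽 W)).card = ρ := by
        have h1 := card_below (𝔽 := 𝔽) W
        rw [Nat.card_eq_fintype_card, Fintype.card_subtype] at h1
        rw [h1, hWrk, hq]
      omega
  obtain ⟨f, hfinj, hft⟩ := hHall
  set φ : Submodule 𝔽 V → Submodule 𝔽 V :=
    fun z => if h : z ∈ E then f ⟨z, h⟩ else z with hφ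
  have hφE : ∀ F (hF : F ∈ E), φ F = f ⟨F, hF⟩ := fun F hF => dif_pos hF
  have hφmem : ∀ F (hF : F ∈ E), φ F ∈ t F := by
    intro F hF; rw [hφE F hF]; exact hft ⟨F, hF⟩
  have hφlt : ∀ F ∈ E, F < φ F := fun F hF =>
    ((mem_filter.mp (mem_filter.mp (hφmem F hF)).1).2).1
  have hφrk : ∀ F ∈ E, finrank 𝔽 (φ F) = d + 1 := fun F hF =>
    ((mem_filter.mp (mem_filter.mp (hφmem F hF)).1).2).2
  have hφnot : ∀ F ∈ E, φ F ∉ 𝓕 := fun F hF => (mem_filter.mp (hφmem F hF)).2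
  have hφinj : Set.InjOn φ E := by
    intro x hx y hy hxy
    have hx' : x ∈ E := hx
    have hy' : y ∈ E := hy
    rw [hφE x hx', hφE y hy'] at hxy
    have := hfinj hxy
    exact congrArg Subtype.val this
  have h4 : ∀ z ∈ 𝓕, z ∉ E → ∀ F ∈ E, ¬ z < φ F := by
    intro z hz𝓕 hzE F hF hlt
    have h1 : finrank 𝔽 z < finrank 𝔽 (φ F) := Submodule.finrank_lt_finrank_of_lt hlt
    have h2 : d ≤ finrank 𝔽 z := hmin z hz𝓕
    have hne : ¬ (finrank 𝔽 z = d) := fun h => hzE (mem_filter.mpr ⟨hz𝓕, h⟩)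
    have h3 := hφrk F hF
    omega
  have h5 : ∀ F ∈ E, ∀ F' ∈ E, ¬ φ F < φ F' := by
    intro F hF F' hF' hlt
    have h1 : finrank 𝔽 (φ F) < finrank 𝔽 (φ F') := Submodule.finrank_lt_finrank_of_lt hlt
    have h2 := hφrk F hF
    have h3 := hφrk F' hF'
    omega
  obtain ⟨hcard, hup, hdown⟩ := swap_main (r := fun a b => a < b) hEsub hφlt hφnot hφinj h4 h5
    (fun a b c hab hbc => lt_trans hab hbc)
  have hmem𝓖 : ∀ z ∈ swapFam 𝓕 E φ, (z ∈ 𝓕 ∧ z ∉ E) ∨ ∃ F ∈ E, z = φ F := by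
    intro z hzmem
    rcases mem_union.mp hzmem with h | h
    · exact Or.inl (by simpa [mem_sdiff] using h)
    · obtain ⟨F, hF, rfl⟩ := mem_image.mp h
      exact Or.inr ⟨F, hF, rfl⟩
  refine ⟨swapFam 𝓕 E φ, ⟨?_, ?_⟩, hcard, ?_, ?_⟩
  · -- up-degrees
    intro z hz
    have h6 := hup (k - 1) (fun w hw => by have := hGood.1 w hw; omega) z hz
    omega
  · -- down-degrees
    intro z hz
    have hlpos : 1 ≤ l := by have := hGood.2 b hb; omega
    have h6 := hdown (l - 1) (fun w hw => by have := hGood.2 w hw; omega) z hz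
    omega
  · -- ranks stay ≤ m
    intro z hz
    rcases hmem𝓖 z hz with ⟨h1, _⟩ | ⟨F, hF, rfl⟩
    · exact hlem z h1
    · rw [hφrk F hF]; omega
  · -- measure decreases
    have hdisj : Disjoint (𝓕 \ E) (E.image φ) := by
      rw [disjoint_right]
      intro a ha
      obtain ⟨F, hF, rfl⟩ := mem_image.mp ha
      intro hmem
      exact hφnot F hF (mem_sdiff.mp hmem).1
    have hsum𝓖 : ∑ z ∈ swapFam 𝓕 E φ, (m - finrank 𝔽 z)
        = (∑ z ∈ 𝓕 \ E, (m - finrank 𝔽 z)) + ∑ F ∈ E, (m - finrank 𝔽 (φ F)) := by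
      rw [swapFam, sum_union hdisj, sum_image (fun x hx y hy h => hφinj hx hy h)]
    have hsplit𝓕 : (∑ z ∈ 𝓕 \ E, (m - finrank 𝔽 z)) + ∑ z ∈ E, (m - finrank 𝔽 z)
        = ∑ z ∈ 𝓕, (m - finrank 𝔽 z) := sum_sdiff hEsub
    have hptw : (∑ F ∈ E, (m - finrank 𝔽 (φ F))) + E.card = ∑ F ∈ E, (m - finrank 𝔽 F) := by
      rw [card_eq_sum_ones E, ← sum_add_distrib]
      apply sum_congr rfl
      intro F hF
      have h1 := hφrk F hF
      have h2 : finrank 𝔽 F = d := (mem_filter.mp hF).2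
      omega
    have hEpos : 0 < E.card := card_pos.mpr ⟨b, hbE⟩
    omega

theorem push_down {k l q n m : ℕ} (hq : Fintype.card 𝔽 = q) (hn : finrank 𝔽 V = n)
    (hnm : n = m + m) (hl : l ≤ q ^ m)
    {𝓕 : Finset (Submodule 𝔽 V)} (hGood : Good k l 𝓕)
    {z₀ : Submodule 𝔽 V} (hz₀ : z₀ ∈ 𝓕) (hz₀m : m < finrank 𝔽 z₀) :
    ∃ 𝓖 : Finset (Submodule 𝔽 V), Good k l 𝓖 ∧ 𝓖.card = 𝓕.card ∧
      (∑ z ∈ 𝓖, (finrank 𝔽 z - m)) < ∑ z ∈ 𝓕, (finrank 𝔽 z - m) := by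
  haveI : Finite V := Module.finite_of_finite 𝔽
  haveI : Finite (Submodule 𝔽 V) :=
    Finite.of_injective (fun p : Submodule 𝔽 V => (p : Set V)) SetLike.coe_injective
  haveI : Fintype (Submodule 𝔽 V) := Fintype.ofFinite _
  obtain ⟨b, hb, hmax⟩ := 𝓕.exists_max_image (fun z : Submodule 𝔽 V => finrank 𝔽 z) ⟨z₀, hz₀⟩
  set D := finrank 𝔽 b with hD
  have hdm : m < D := lt_of_lt_of_le hz₀m (hmax z₀ hz₀)
  have hDn : D ≤ n := hn ▸ b.finrank_le
  set E := 𝓕.filter (fun z : Submodule 𝔽 V => finrank 𝔽 z = D) with hE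
  have hEsub : E ⊆ 𝓕 := filter_subset _ _
  have hbE : b ∈ E := mem_filter.mpr ⟨hb, rfl⟩
  have hlpos : 1 ≤ l := by have := hGood.2 b hb; omega
  set t : Submodule 𝔽 V → Finset (Submodule 𝔽 V) :=
    fun F => (univ.filter (fun W : Submodule 𝔽 V => W < F ∧ finrank 𝔽 W + 1 = D)).filter
      (fun W : Submodule 𝔽 V => W ∉ 𝓕) with ht
  -- number of hyperplanes below F
  have hcov : ∀ F ∈ E, (univ.filter
      (fun W : Submodule 𝔽 V => W < F ∧ finrank 𝔽 W + 1 = D)).card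
      = ∑ i ∈ range D, q ^ i := by
    intro F hF
    have hFd : finrank 𝔽 F = D := (mem_filter.mp hF).2
    have h1 := card_below (𝔽 := 𝔽) F
    simp only [hFd, hq] at h1
    rw [Nat.card_eq_fintype_card, Fintype.card_subtype] at h1
    exact h1
  -- hyperplanes inside 𝓕 are few
  have hupk : ∀ F ∈ E, ((univ.filter
      (fun W : Submodule 𝔽 V => W < F ∧ finrank 𝔽 W + 1 = D)).filter
      (fun W : Submodule 𝔽 V => W ∈ 𝓕)).card + 1 ≤ l := by
    intro F hF
    have hsub2 : (univ.filter
        (fun W : Submodule 𝔽 V => W < F ∧ finrank 𝔽 W + 1 = D)).filter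
        (fun W : Submodule 𝔽 V => W ∈ 𝓕) ⊆ 𝓕.filter (fun A : Submodule 𝔽 V => A < F) := by
      intro W hW
      simp only [mem_filter, mem_univ, true_and] at hW ⊢
      exact ⟨hW.2, hW.1.1⟩
    exact le_trans (Nat.add_le_add_right (card_le_card hsub2) 1) (hGood.2 F (hEsub hF))
  set ρ := ∑ i ∈ range (n - D + 1), q ^ i with hρ
  -- left degree bound
  have htcard : ∀ F ∈ E, ρ + 1 ≤ (t F).card := by
    intro F hF
    have hsplit := card_filter_add_card_filter_not
      (s := univ.filter (fun W : Submodule 𝔽 V => W < F ∧ finrank 𝔽 W + 1 = D))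
      (p := fun W : Submodule 𝔽 V => W ∈ 𝓕)
    have hL := L_split (q := q) (m := m) (b := n - D + 1) (a := D) (by omega) (by omega)
    have h2 := hupk F hF
    have h3 := hcov F hF
    have ht4 : (t F).card = ((univ.filter
        (fun W : Submodule 𝔽 V => W < F ∧ finrank 𝔽 W + 1 = D)).filter
        (fun W : Submodule 𝔽 V => ¬ W ∈ 𝓕)).card := rfl
    omega
  -- right degree bound and Hall
  have hHall : ∃ f : {x // x ∈ E} → Submodule 𝔽 V,
      Function.Injective f ∧ ∀ x, f x ∈ t x.1 := by
    apply hall_of_degrees (t := fun x : {x // x ∈ E} => t x.1) (ρ := ρ)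
    · intro x; exact htcard x.1 x.2
    · intro s W hW
      obtain ⟨x, hxs, hxW⟩ := mem_biUnion.mp hW
      have hWrk : finrank 𝔽 W + 1 = D := (mem_filter.mp (mem_filter.mp hxW).1).2.2
      have hinj : (s.filter (fun x => W ∈ t x.1)).card
          ≤ (univ.filter
            (fun F : Submodule 𝔽 V => W < F ∧ finrank 𝔽 F = finrank 𝔽 W + 1)).card := by
        apply card_le_card_of_injOn (fun x => x.1)
        · intro y hy
          simp only [mem_coe, mem_filter, mem_univ, true_and]
          have hyt := (mem_filter.mp hy).2
          have h1 := (mem_filter.mp (mem_filter.mp hyt).1).2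
          have h2 : finrank 𝔽 y.1 = D := (mem_filter.mp y.2).2
          exact ⟨h1.1, by omega⟩
        · intro a _ c _ hac; exact Subtype.ext hac
      have hcovW : (univ.filter
          (fun F : Submodule 𝔽 V => W < F ∧ finrank 𝔽 F = finrank 𝔽 W + 1)).card = ρ := by
        have h1 := card_covers (𝔽 := 𝔽) W
        rw [Nat.card_eq_fintype_card, Fintype.card_subtype] at h1
        rw [h1, hq, hρ]
        have : n - finrank 𝔽 W = n - D + 1 := by omega
        rw [hn, this]
      omega
  obtain ⟨f, hfinj, hft⟩ := hHall
  set φ : Submodule 𝔽 V → Submodule 𝔽 V :=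
    fun z => if h : z ∈ E then f ⟨z, h⟩ else z with hφ
  have hφE : ∀ F (hF : F ∈ E), φ F = f ⟨F, hF⟩ := fun F hF => dif_pos hF
  have hφmem : ∀ F (hF : F ∈ E), φ F ∈ t F := by
    intro F hF; rw [hφE F hF]; exact hft ⟨F, hF⟩
  have hφlt : ∀ F ∈ E, φ F < F := fun F hF =>
    ((mem_filter.mp (mem_filter.mp (hφmem F hF)).1).2).1
  have hφrk : ∀ F ∈ E, finrank 𝔽 (φ F) + 1 = D := fun F hF =>
    ((mem_filter.mp (mem_filter.mp (hφmem F hF)).1).2).2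
  have hφnot : ∀ F ∈ E, φ F ∉ 𝓕 := fun F hF => (mem_filter.mp (hφmem F hF)).2
  have hφinj : Set.InjOn φ E := by
    intro x hx y hy hxy
    have hx' : x ∈ E := hx
    have hy' : y ∈ E := hy
    rw [hφE x hx', hφE y hy'] at hxy
    exact congrArg Subtype.val (hfinj hxy)
  have h4 : ∀ z ∈ 𝓕, z ∉ E → ∀ F ∈ E, ¬ φ F < z := by
    intro z hz𝓕 hzE F hF hlt
    have h1 : finrank 𝔽 (φ F) < finrank 𝔽 z := Submodule.finrank_lt_finrank_of_lt hlt
    have h2 : finrank 𝔽 z ≤ D := hmax z hz𝓕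
    have hne : ¬ (finrank 𝔽 z = D) := fun h => hzE (mem_filter.mpr ⟨hz𝓕, h⟩)
    have h3 := hφrk F hF
    omega
  have h5 : ∀ F ∈ E, ∀ F' ∈ E, ¬ φ F' < φ F := by
    intro F hF F' hF' hlt
    have h1 : finrank 𝔽 (φ F') < finrank 𝔽 (φ F) := Submodule.finrank_lt_finrank_of_lt hlt
    have h2 := hφrk F hF
    have h3 := hφrk F' hF'
    omega
  obtain ⟨hcard, hup, hdown⟩ := swap_main (r := fun a b => b < a) hEsub hφlt hφnot hφinj
    (fun z hz hze F hF => h4 z hz hze F hF) (fun F hF F' hF' => h5 F hF F' hF')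
    (fun a b c hab hbc => lt_trans hbc hab)
  have hmem𝓖 : ∀ z ∈ swapFam 𝓕 E φ, (z ∈ 𝓕 ∧ z ∉ E) ∨ ∃ F ∈ E, z = φ F := by
    intro z hzmem
    rcases mem_union.mp hzmem with h | h
    · exact Or.inl (by simpa [mem_sdiff] using h)
    · obtain ⟨F, hF, rfl⟩ := mem_image.mp h
      exact Or.inr ⟨F, hF, rfl⟩
  refine ⟨swapFam 𝓕 E φ, ⟨?_, ?_⟩, hcard, ?_⟩
  · -- up-degrees (these are the r-down bounds)
    intro z hz
    have hkpos : 1 ≤ k := by have := hGood.1 b hb; omega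
    have h6 := hdown (k - 1) (fun w hw => by have := hGood.1 w hw; omega) z hz
    omega
  · -- down-degrees
    intro z hz
    have h6 := hup (l - 1) (fun w hw => by have := hGood.2 w hw; omega) z hz
    omega
  · -- measure decreases
    have hdisj : Disjoint (𝓕 \ E) (E.image φ) := by
      rw [disjoint_right]
      intro a ha
      obtain ⟨F, hF, rfl⟩ := mem_image.mp ha
      intro hmem
      exact hφnot F hF (mem_sdiff.mp hmem).1
    have hsum𝓖 : ∑ z ∈ swapFam 𝓕 E φ, (finrank 𝔽 z - m)
        = (∑ z ∈ 𝓕 \ E, (finrank 𝔽 z - m)) + ∑ F ∈ E, (finrank 𝔽 (φ F) - m) := by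
      rw [swapFam, sum_union hdisj, sum_image (fun x hx y hy h => hφinj hx hy h)]
    have hsplit𝓕 : (∑ z ∈ 𝓕 \ E, (finrank 𝔽 z - m)) + ∑ z ∈ E, (finrank 𝔽 z - m)
        = ∑ z ∈ 𝓕, (finrank 𝔽 z - m) := sum_sdiff hEsub
    have hptw : (∑ F ∈ E, (finrank 𝔽 (φ F) - m)) + E.card
        = ∑ F ∈ E, (finrank 𝔽 F - m) := by
      rw [card_eq_sum_ones E, ← sum_add_distrib]
      apply sum_congr rfl
      intro F hF
      have h1 := hφrk F hF
      have h2 : finrank 𝔽 F = D := (mem_filter.mp hF).2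
      omega
    have hEpos : 0 < E.card := card_pos.mpr ⟨b, hbE⟩
    omega

theorem phase_down {k l q n m : ℕ} (hq : Fintype.card 𝔽 = q) (hn : finrank 𝔽 V = n)
    (hnm : n = m + m) (hl : l ≤ q ^ m) :
    ∀ (N : ℕ) (𝓕 : Finset (Submodule 𝔽 V)),
      (∑ z ∈ 𝓕, (finrank 𝔽 z - m)) ≤ N → Good k l 𝓕 →
      ∃ 𝓖 : Finset (Submodule 𝔽 V), Good k l 𝓖 ∧ 𝓖.card = 𝓕.card ∧ ∀ z ∈ 𝓖, finrank 𝔽 z ≤ m := by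
  intro N
  induction N with
  | zero =>
    intro 𝓕 hmeas hGood
    refine ⟨𝓕, hGood, rfl, fun z hz => ?_⟩
    have h0 : (∑ z ∈ 𝓕, (finrank 𝔽 z - m)) = 0 := by omega
    have := (Finset.sum_eq_zero_iff.mp h0) z hz
    omega
  | succ N ih =>
    intro 𝓕 hmeas hGood
    by_cases hca : ∀ z ∈ 𝓕, finrank 𝔽 z ≤ m
    · exact ⟨𝓕, hGood, rfl, hca⟩
    · push_neg at hca
      obtain ⟨z₀, hz₀, hz₀m⟩ := hca
      obtain ⟨𝓖, hG, hGc, hGm⟩ := push_down hq hn hnm hl hGood hz₀ hz₀m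
      obtain ⟨𝓗, h1, h2, h3⟩ := ih 𝓖 (by omega) hG
      exact ⟨𝓗, h1, h2.trans hGc, h3⟩

theorem phase_up {k l q n m : ℕ} (hq : Fintype.card 𝔽 = q) (hn : finrank 𝔽 V = n)
    (hnm : n = m + m) (hk : k ≤ q ^ m) :
    ∀ (N : ℕ) (𝓕 : Finset (Submodule 𝔽 V)),
      (∑ z ∈ 𝓕, (m - finrank 𝔽 z)) ≤ N → Good k l 𝓕 → (∀ z ∈ 𝓕, finrank 𝔽 z ≤ m) →
      ∃ 𝓖 : Finset (Submodule 𝔽 V), Good k l 𝓖 ∧ 𝓖.card = 𝓕.card ∧ ∀ z ∈ 𝓖, finrank 𝔽 z = m := by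
  intro N
  induction N with
  | zero =>
    intro 𝓕 hmeas hGood hle
    refine ⟨𝓕, hGood, rfl, fun z hz => ?_⟩
    have h0 : (∑ z ∈ 𝓕, (m - finrank 𝔽 z)) = 0 := by omega
    have h1 := (Finset.sum_eq_zero_iff.mp h0) z hz
    have := hle z hz
    omega
  | succ N ih =>
    intro 𝓕 hmeas hGood hle
    by_cases hca : ∀ z ∈ 𝓕, finrank 𝔽 z = m
    · exact ⟨𝓕, hGood, rfl, hca⟩
    · push_neg at hca
      obtain ⟨z₀, hz₀, hz₀m⟩ := hca
      have hz₀lt : finrank 𝔽 z₀ < m := lt_of_le_of_ne (hle z₀ hz₀) hz₀m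
      obtain ⟨𝓖, hG, hGc, hGle, hGm⟩ := push_up hq hn hnm hk hGood hle hz₀ hz₀lt
      obtain ⟨𝓗, h1, h2, h3⟩ := ih 𝓖 (by omega) hG hGle
      exact ⟨𝓗, h1, h2.trans hGc, h3⟩

theorem card_le_middle {k l q n m : ℕ} (hq : Fintype.card 𝔽 = q) (hn : finrank 𝔽 V = n)
    (hnm : n = m + m) (hk : k ≤ q ^ m) (hl : l ≤ q ^ m)
    [Fintype (Submodule 𝔽 V)]
    (𝓕 : Finset (Submodule 𝔽 V)) (hGood : Good k l 𝓕) :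
    𝓕.card ≤ (univ.filter (fun W : Submodule 𝔽 V => finrank 𝔽 W = m)).card := by
  obtain ⟨𝓖, hG, hGc, hGle⟩ := phase_down hq hn hnm hl _ 𝓕 le_rfl hGood
  obtain ⟨𝓗, hH, hHc, hHm⟩ := phase_up hq hn hnm hk _ 𝓖 le_rfl hG hGle
  have hsub : 𝓗 ⊆ univ.filter (fun W : Submodule 𝔽 V => finrank 𝔽 W = m) := by
    intro z hz
    exact mem_filter.mpr ⟨mem_univ _, hHm z hz⟩
  calc 𝓕.card = 𝓖.card := hGc.symm
    _ = 𝓗.card := hHc.symm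
    _ ≤ _ := card_le_card hsub

end Push

end Stmt4Aux


/-- The family `𝓕` contains the poset `V_k` (one element below `k` distinct elements)
as a (not necessarily induced) subposet. -/
def ContainsVee {𝔽 V : Type*} [Field 𝔽] [AddCommGroup V] [Module 𝔽 V]
    (𝓕 : Set (Submodule 𝔽 V)) (k : ℕ) : Prop :=
  ∃ z ∈ 𝓕, ∃ S : Finset (Submodule 𝔽 V), ↑S ⊆ 𝓕 ∧ S.card = k ∧ ∀ A ∈ S, z < A

/-- The family `𝓕` contains the poset `Λ_l` (one element above `l` distinct elements)
as a (not necessarily induced) subposet. -/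
def ContainsLam {𝔽 V : Type*} [Field 𝔽] [AddCommGroup V] [Module 𝔽 V]
    (𝓕 : Set (Submodule 𝔽 V)) (l : ℕ) : Prop :=
  ∃ z ∈ 𝓕, ∃ S : Finset (Submodule 𝔽 V), ↑S ⊆ 𝓕 ∧ S.card = l ∧ ∀ A ∈ S, A < z

open Stmt4Aux in
theorem stmt_4 {𝔽 V : Type*} [Field 𝔽] [Fintype 𝔽] [AddCommGroup V] [Module 𝔽 V]
    [FiniteDimensional 𝔽 V] (q n k l : ℕ) (hq : Fintype.card 𝔽 = q)
    (hn : Module.finrank 𝔽 V = n) (hne : Even n)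
    (hk1 : 2 ≤ k) (hk2 : k ≤ q ^ (n / 2)) (hl1 : 2 ≤ l) (hl2 : l ≤ q ^ (n / 2)) :
    IsGreatest {m | ∃ 𝓕 : Set (Submodule 𝔽 V),
        ¬ ContainsVee 𝓕 k ∧ ¬ ContainsLam 𝓕 l ∧ 𝓕.ncard = m}
      {W : Submodule 𝔽 V | Module.finrank 𝔽 W = n / 2}.ncard ∧
    ¬ ContainsVee {W : Submodule 𝔽 V | Module.finrank 𝔽 W = n / 2} k ∧
    ¬ ContainsLam {W : Submodule 𝔽 V | Module.finrank 𝔽 W = n / 2} l := by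
  classical
  haveI : Finite V := Module.finite_of_finite 𝔽
  haveI : Finite (Submodule 𝔽 V) :=
    Finite.of_injective (fun p : Submodule 𝔽 V => (p : Set V)) SetLike.coe_injective
  haveI : Fintype (Submodule 𝔽 V) := Fintype.ofFinite _
  obtain ⟨m, hm⟩ := hne
  have hm2 : n / 2 = m := by omega
  have hMidV : ¬ ContainsVee {W : Submodule 𝔽 V | Module.finrank 𝔽 W = n / 2} k := by
    rintro ⟨z, hz, S, hS, hcard, hlt⟩
    obtain ⟨A, hA⟩ : S.Nonempty := Finset.card_pos.mp (by omega)
    have h1 : finrank 𝔽 z < finrank 𝔽 A := Submodule.finrank_lt_finrank_of_lt (hlt A hA)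
    have h2 : finrank 𝔽 z = n / 2 := hz
    have h3 : finrank 𝔽 A = n / 2 := hS hA
    omega
  have hMidL : ¬ ContainsLam {W : Submodule 𝔽 V | Module.finrank 𝔽 W = n / 2} l := by
    rintro ⟨z, hz, S, hS, hcard, hlt⟩
    obtain ⟨A, hA⟩ : S.Nonempty := Finset.card_pos.mp (by omega)
    have h1 : finrank 𝔽 A < finrank 𝔽 z := Submodule.finrank_lt_finrank_of_lt (hlt A hA)
    have h2 : finrank 𝔽 z = n / 2 := hz
    have h3 : finrank 𝔽 A = n / 2 := hS hA
    omega
  refine ⟨⟨⟨{W | Module.finrank 𝔽 W = n / 2}, hMidV, hMidL, rfl⟩, ?_⟩, hMidV, hMidL⟩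
  rintro x ⟨𝓕s, hV, hL, rfl⟩
  have hfin : 𝓕s.Finite := Set.toFinite _
  have hmem : ∀ {z : Submodule 𝔽 V}, z ∈ hfin.toFinset ↔ z ∈ 𝓕s :=
    fun {z} => hfin.mem_toFinset
  have hGood : Good k l hfin.toFinset := by
    constructor
    · intro z hz
      by_contra hcon
      push_neg at hcon
      have hk' : k ≤ ((hfin.toFinset).filter (fun A => z < A)).card := by omega
      obtain ⟨T, hT, hTcard⟩ := Finset.exists_subset_card_eq hk'
      refine hV ⟨z, hmem.mp hz, T, ?_, hTcard, fun A hA => (Finset.mem_filter.mp (hT hA)).2⟩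
      intro A hA
      exact hmem.mp (Finset.mem_of_mem_filter A (hT (Finset.mem_coe.mp hA)))
    · intro z hz
      by_contra hcon
      push_neg at hcon
      have hl' : l ≤ ((hfin.toFinset).filter (fun A => A < z)).card := by omega
      obtain ⟨T, hT, hTcard⟩ := Finset.exists_subset_card_eq hl'
      refine hL ⟨z, hmem.mp hz, T, ?_, hTcard, fun A hA => (Finset.mem_filter.mp (hT hA)).2⟩
      intro A hA
      exact hmem.mp (Finset.mem_of_mem_filter A (hT (Finset.mem_coe.mp hA)))
  have hbound := card_le_middle hq hn (by omega : n = m + m)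
    (by rwa [hm2] at hk2) (by rwa [hm2] at hl2) hfin.toFinset hGood
  have h1 : 𝓕s.ncard = hfin.toFinset.card := Set.ncard_eq_toFinset_card 𝓕s hfin
  have h2 : {W : Submodule 𝔽 V | Module.finrank 𝔽 W = n / 2}.ncard
      = (Finset.univ.filter (fun W : Submodule 𝔽 V => finrank 𝔽 W = m)).card := by
    rw [Set.ncard_eq_toFinset_card _ (Set.toFinite _)]
    congr 1
    ext W
    simp [Set.Finite.mem_toFinset, hm2]
  omega
end

section
/- Let V be an n-dimensional vector space over F_q with basis v₁,...,vₙ, and let H be a family of subspaces each spanned by a subset of the basis (a simple family). Let P be a finite poset, F a P-free family of subspaces of V, and α(H,P) the maximum size of a P-free subfamily of H. Then Σ_{F ∈ F} N_{dim F}(H) / [n choose dim F]_q ≤ α(H, P), where N_i(H) is the number of i-dimensional subspaces in H. -/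
/-- The family `𝓕` contains the poset `P` as a (not necessarily induced) subposet. -/
def ContainsCopy {𝔽 V : Type*} [Field 𝔽] [AddCommGroup V] [Module 𝔽 V]
    (P : Type*) [PartialOrder P] (𝓕 : Set (Submodule 𝔽 V)) : Prop :=
  ∃ φ : P → Submodule 𝔽 V, Function.Injective φ ∧ (∀ a, φ a ∈ 𝓕) ∧
    ∀ a b : P, a ≤ b → φ a ≤ φ b

open Module Finset

section Aux

variable {𝔽 V : Type*} [Field 𝔽] [AddCommGroup V] [Module 𝔽 V] [FiniteDimensional 𝔽 V]

lemma aux_exists_map_eq (F W : Submodule 𝔽 V)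
    (h : finrank 𝔽 F = finrank 𝔽 W) :
    ∃ e : V ≃ₗ[𝔽] V, Submodule.map (e : V →ₗ[𝔽] V) F = W := by
  obtain ⟨F', hF'⟩ := F.exists_isCompl
  obtain ⟨W', hW'⟩ := W.exists_isCompl
  obtain ⟨e₁⟩ := FiniteDimensional.nonempty_linearEquiv_of_finrank_eq h
  have hdim : finrank 𝔽 F' = finrank 𝔽 W' := by
    have h1 := Submodule.finrank_add_eq_of_isCompl hF'
    have h2 := Submodule.finrank_add_eq_of_isCompl hW'
    omega
  obtain ⟨e₂⟩ := FiniteDimensional.nonempty_linearEquiv_of_finrank_eq hdim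
  refine ⟨((Submodule.prodEquivOfIsCompl F F' hF').symm.trans
      (LinearEquiv.prodCongr e₁ e₂ : (↥F × ↥F') ≃ₗ[𝔽] (↥W × ↥W'))).trans
      (Submodule.prodEquivOfIsCompl W W' hW'), ?_⟩
  have hle : Submodule.map ((((Submodule.prodEquivOfIsCompl F F' hF').symm.trans
      (LinearEquiv.prodCongr e₁ e₂ : (↥F × ↥F') ≃ₗ[𝔽] (↥W × ↥W'))).trans
      (Submodule.prodEquivOfIsCompl W W' hW')) : V →ₗ[𝔽] V) F ≤ W := by
    rintro x ⟨y, hy, rfl⟩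
    have hsymm : (Submodule.prodEquivOfIsCompl F F' hF').symm y
        = ((⟨y, hy⟩ : ↥F), (0 : ↥F')) :=
      Submodule.prodEquivOfIsCompl_symm_apply_left (p := F) (q := F') hF' (⟨y, hy⟩ : ↥F)
    simp [hsymm]
  refine Submodule.eq_of_le_of_finrank_eq hle ?_
  rw [show ∀ (e : V ≃ₗ[𝔽] V) (p : Submodule 𝔽 V),
      Submodule.map (e : V →ₗ[𝔽] V) p = Submodule.map (e : V →ₗ[𝔽] V) p from fun _ _ => rfl,
    LinearEquiv.finrank_map_eq, h]

lemma aux_finrank_map (e : V ≃ₗ[𝔽] V) (p : Submodule 𝔽 V) :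
    finrank 𝔽 (Submodule.map (e : V →ₗ[𝔽] V) p) = finrank 𝔽 p :=
  LinearEquiv.finrank_map_eq e p

lemma aux_map_mul (e f : V ≃ₗ[𝔽] V) (p : Submodule 𝔽 V) :
    Submodule.map ((e * f : V ≃ₗ[𝔽] V) : V →ₗ[𝔽] V) p = Submodule.map (e : V →ₗ[𝔽] V) (Submodule.map (f : V →ₗ[𝔽] V) p) := by
  have hmul : ∀ x : V, (e * f) x = e (f x) := fun _ => rfl
  ext x
  simp only [Submodule.mem_map, hmul]
  constructor
  · rintro ⟨y, hy, rfl⟩; exact ⟨f y, ⟨y, hy, rfl⟩, rfl⟩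
  · rintro ⟨_, ⟨y, hy, rfl⟩, rfl⟩; exact ⟨y, hy, rfl⟩

lemma aux_map_symm_map (e : V ≃ₗ[𝔽] V) (p : Submodule 𝔽 V) :
    Submodule.map (e.symm : V →ₗ[𝔽] V) (Submodule.map (e : V →ₗ[𝔽] V) p) = p := by
  ext x
  constructor
  · rintro ⟨_, ⟨y, hy, rfl⟩, rfl⟩; simpa using hy
  · intro hx; exact ⟨e x, ⟨x, hx, rfl⟩, by simp⟩

lemma aux_map_injective (e : V ≃ₗ[𝔽] V) :
    Function.Injective (fun p : Submodule 𝔽 V => Submodule.map (e : V →ₗ[𝔽] V) p) := by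
  intro p q h
  have := congrArg (Submodule.map (e.symm : V →ₗ[𝔽] V)) h
  simpa [aux_map_symm_map] using this

lemma aux_map_one (p : Submodule 𝔽 V) :
    Submodule.map ((1 : V ≃ₗ[𝔽] V) : V →ₗ[𝔽] V) p = p := by
  ext x
  constructor
  · rintro ⟨y, hy, rfl⟩; exact hy
  · intro hx; exact ⟨x, hx, rfl⟩

end Aux

theorem stmt_14 {𝔽 V : Type*} [Field 𝔽] [Fintype 𝔽] [AddCommGroup V] [Module 𝔽 V]
    [FiniteDimensional 𝔽 V] (n : ℕ) (hn : Module.finrank 𝔽 V = n)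
    (P : Type*) [PartialOrder P] [Fintype P]
    (v : Module.Basis (Fin n) 𝔽 V) (𝓗 : Set (Submodule 𝔽 V))
    (hsimple : ∀ H ∈ 𝓗, ∃ S : Set (Fin n), H = Submodule.span 𝔽 (⇑v '' S))
    (α : ℕ)
    (hα : IsGreatest
      {m | ∃ 𝓖 : Set (Submodule 𝔽 V), 𝓖 ⊆ 𝓗 ∧ ¬ ContainsCopy P 𝓖 ∧ 𝓖.ncard = m} α)
    (𝓕 : Finset (Submodule 𝔽 V)) (hF : ¬ ContainsCopy P (↑𝓕 : Set (Submodule 𝔽 V))) :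
    ∑ F ∈ 𝓕,
        (({H | H ∈ 𝓗 ∧ Module.finrank 𝔽 H = Module.finrank 𝔽 F}.ncard : ℚ) /
          ({W : Submodule 𝔽 V | Module.finrank 𝔽 W = Module.finrank 𝔽 F}.ncard : ℚ)) ≤
      (α : ℚ) := by
  classical
  have hVfin : Finite V := Module.finite_of_finite 𝔽
  have hSubFin : Finite (Submodule 𝔽 V) :=
    Finite.of_injective (fun p : Submodule 𝔽 V => (p : Set V)) SetLike.coe_injective
  have : Fintype (Submodule 𝔽 V) := Fintype.ofFinite _
  have hGFin : Finite (V ≃ₗ[𝔽] V) :=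
    Finite.of_injective (fun e : V ≃ₗ[𝔽] V => (e : V → V)) DFunLike.coe_injective
  have : Fintype (V ≃ₗ[𝔽] V) := Fintype.ofFinite _
  set G : ℕ := Fintype.card (V ≃ₗ[𝔽] V) with hG
  have hGpos : 0 < G := Fintype.card_pos
  -- Finset versions of the counting sets
  set T : Submodule 𝔽 V → Finset (Submodule 𝔽 V) :=
    fun F => univ.filter (fun W => finrank 𝔽 W = finrank 𝔽 F) with hT
  set NH : Submodule 𝔽 V → Finset (Submodule 𝔽 V) :=
    fun F => univ.filter (fun W => W ∈ 𝓗 ∧ finrank 𝔽 W = finrank 𝔽 F) with hNH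
  set A : Submodule 𝔽 V → Finset (V ≃ₗ[𝔽] V) :=
    fun F => univ.filter (fun g => Submodule.map ((g : V ≃ₗ[𝔽] V) : V →ₗ[𝔽] V) F ∈ 𝓗) with hA
  set Fib : Submodule 𝔽 V → Submodule 𝔽 V → Finset (V ≃ₗ[𝔽] V) :=
    fun F W => univ.filter (fun g => Submodule.map ((g : V ≃ₗ[𝔽] V) : V →ₗ[𝔽] V) F = W) with hFib
  -- fibers over subspaces of the right dimension all have the same cardinality
  have hfib_const : ∀ F W₁ W₂ : Submodule 𝔽 V, finrank 𝔽 W₁ = finrank 𝔽 W₂ →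
      (Fib F W₁).card = (Fib F W₂).card := by
    intro F W₁ W₂ hdim
    obtain ⟨h, hh⟩ := aux_exists_map_eq W₁ W₂ hdim
    apply Finset.card_bij' (fun g _ => h * g) (fun g' _ => h⁻¹ * g')
    · intro g hg
      simp only [hFib, mem_filter, mem_univ, true_and] at hg ⊢
      rw [aux_map_mul, hg, hh]
    · intro g' hg'
      simp only [hFib, mem_filter, mem_univ, true_and] at hg' ⊢
      rw [aux_map_mul, hg']
      have := congrArg (fun p => Submodule.map ((h⁻¹ : V ≃ₗ[𝔽] V) : V →ₗ[𝔽] V) p) hh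
      rw [← aux_map_mul, inv_mul_cancel, aux_map_one] at this
      exact this.symm
    · intro g _; group
    · intro g _; group
  -- total fiber decomposition
  have hTsum : ∀ F : Submodule 𝔽 V, G = (T F).card * (Fib F F).card := by
    intro F
    have h1 : (univ : Finset (V ≃ₗ[𝔽] V)).card
        = ∑ W ∈ T F, (univ.filter (fun g : V ≃ₗ[𝔽] V => Submodule.map ((g : V ≃ₗ[𝔽] V) : V →ₗ[𝔽] V) F = W)).card := by
      apply Finset.card_eq_sum_card_fiberwise
      intro g _
      simp only [hT, mem_coe, mem_filter, mem_univ, true_and]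
      exact aux_finrank_map g F
    rw [hG, ← Finset.card_univ, h1]
    have h2 : ∀ W ∈ T F, (univ.filter (fun g : V ≃ₗ[𝔽] V => Submodule.map ((g : V ≃ₗ[𝔽] V) : V →ₗ[𝔽] V) F = W)).card
        = (Fib F F).card := by
      intro W hW
      simp only [hT, mem_filter, mem_univ, true_and] at hW
      exact hfib_const F W F hW
    rw [Finset.sum_congr rfl h2, Finset.sum_const, smul_eq_mul]
  have hAsum : ∀ F : Submodule 𝔽 V, (A F).card = (NH F).card * (Fib F F).card := by
    intro F
    have h1 : (A F).card
        = ∑ W ∈ NH F, ((A F).filter (fun g => Submodule.map ((g : V ≃ₗ[𝔽] V) : V →ₗ[𝔽] V) F = W)).card := by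
      apply Finset.card_eq_sum_card_fiberwise
      intro g hg
      simp only [hA, mem_coe, mem_filter, mem_univ, true_and] at hg
      simp only [hNH, mem_coe, mem_filter, mem_univ, true_and]
      exact ⟨hg, aux_finrank_map g F⟩
    rw [h1]
    have h2 : ∀ W ∈ NH F, ((A F).filter (fun g => Submodule.map ((g : V ≃ₗ[𝔽] V) : V →ₗ[𝔽] V) F = W)).card
        = (Fib F F).card := by
      intro W hW
      simp only [hNH, mem_filter, mem_univ, true_and] at hW
      have heq : (A F).filter (fun g => Submodule.map ((g : V ≃ₗ[𝔽] V) : V →ₗ[𝔽] V) F = W) = Fib F W := by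
        ext g
        simp only [hA, hFib, mem_filter, mem_univ, true_and]
        constructor
        · exact fun h => h.2
        · intro h; exact ⟨h ▸ hW.1, h⟩
      rw [heq]
      exact hfib_const F W F hW.2
    rw [Finset.sum_congr rfl h2, Finset.sum_const, smul_eq_mul]
  have hFibpos : ∀ F : Submodule 𝔽 V, 0 < (Fib F F).card := by
    intro F
    apply Finset.card_pos.mpr
    exact ⟨1, by simp [hFib, aux_map_one]⟩
  have hTpos : ∀ F : Submodule 𝔽 V, 0 < (T F).card := by
    intro F
    apply Finset.card_pos.mpr
    exact ⟨F, by simp [hT]⟩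
  -- translate ncards to Finset cards
  have hncard_NH : ∀ F : Submodule 𝔽 V,
      {H | H ∈ 𝓗 ∧ finrank 𝔽 H = finrank 𝔽 F}.ncard = (NH F).card := by
    intro F
    rw [Set.ncard_eq_toFinset_card']
    congr 1
    ext W
    simp [hNH]
  have hncard_T : ∀ F : Submodule 𝔽 V,
      {W : Submodule 𝔽 V | finrank 𝔽 W = finrank 𝔽 F}.ncard = (T F).card := by
    intro F
    rw [Set.ncard_eq_toFinset_card']
    congr 1
    ext W
    simp [hT]
  -- the per-subspace identity in ℚ
  have hkey : ∀ F : Submodule 𝔽 V,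
      ((NH F).card : ℚ) / ((T F).card : ℚ) = ((A F).card : ℚ) / (G : ℚ) := by
    intro F
    rw [div_eq_div_iff (by exact_mod_cast (hTpos F).ne') (by exact_mod_cast hGpos.ne')]
    have : (NH F).card * G = (A F).card * (T F).card := by
      rw [hTsum F, hAsum F]; ring
    exact_mod_cast this
  -- per-automorphism bound
  have hgbound : ∀ g : V ≃ₗ[𝔽] V,
      (𝓕.filter (fun F => Submodule.map ((g : V ≃ₗ[𝔽] V) : V →ₗ[𝔽] V) F ∈ 𝓗)).card ≤ α := by
    intro g
    set B : Finset (Submodule 𝔽 V) := 𝓕.filter (fun F => Submodule.map ((g : V ≃ₗ[𝔽] V) : V →ₗ[𝔽] V) F ∈ 𝓗) with hB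
    set 𝓖 : Set (Submodule 𝔽 V) := (fun F => Submodule.map ((g : V ≃ₗ[𝔽] V) : V →ₗ[𝔽] V) F) '' (↑B) with h𝓖
    have hsub : 𝓖 ⊆ 𝓗 := by
      rintro _ ⟨F, hFB, rfl⟩
      rw [Finset.mem_coe, hB, mem_filter] at hFB
      exact hFB.2
    have hfree : ¬ ContainsCopy P 𝓖 := by
      rintro ⟨φ, hinj, hmem, hmono⟩
      apply hF
      refine ⟨fun a => Submodule.map (g.symm : V →ₗ[𝔽] V) (φ a), ?_, ?_, ?_⟩
      · intro a b hab
        exact hinj (aux_map_injective g.symm hab)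
      · intro a
        obtain ⟨F, hFB, hFeq⟩ := hmem a
        have hFeq' : Submodule.map ((g : V ≃ₗ[𝔽] V) : V →ₗ[𝔽] V) F = φ a := hFeq
        show Submodule.map (g.symm : V →ₗ[𝔽] V) (φ a) ∈ (↑𝓕 : Set (Submodule 𝔽 V))
        rw [← hFeq', aux_map_symm_map]
        rw [Finset.mem_coe, hB, mem_filter] at hFB
        exact hFB.1
      · intro a b hab
        exact Submodule.map_mono (hmono a b hab)
    have hcard : 𝓖.ncard = B.card := by
      rw [h𝓖, Set.ncard_image_of_injective _ (aux_map_injective g), Set.ncard_coe_finset]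
    have : B.card ∈ {m | ∃ 𝓖 : Set (Submodule 𝔽 V),
        𝓖 ⊆ 𝓗 ∧ ¬ ContainsCopy P 𝓖 ∧ 𝓖.ncard = m} := ⟨𝓖, hsub, hfree, hcard⟩
    exact hα.2 this
  -- main computation
  have hswap : ∑ F ∈ 𝓕, ((A F).card : ℚ) ≤ (G : ℚ) * α := by
    have hnat : ∑ F ∈ 𝓕, (A F).card ≤ G * α := by
      have h1 : ∀ F : Submodule 𝔽 V, (A F).card
          = ∑ g : V ≃ₗ[𝔽] V, if Submodule.map ((g : V ≃ₗ[𝔽] V) : V →ₗ[𝔽] V) F ∈ 𝓗 then 1 else 0 := by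
        intro F
        rw [hA, Finset.card_filter]
      calc ∑ F ∈ 𝓕, (A F).card
          = ∑ F ∈ 𝓕, ∑ g : V ≃ₗ[𝔽] V, if Submodule.map ((g : V ≃ₗ[𝔽] V) : V →ₗ[𝔽] V) F ∈ 𝓗 then 1 else 0 := by
            exact Finset.sum_congr rfl fun F _ => h1 F
        _ = ∑ g : V ≃ₗ[𝔽] V, ∑ F ∈ 𝓕, if Submodule.map ((g : V ≃ₗ[𝔽] V) : V →ₗ[𝔽] V) F ∈ 𝓗 then 1 else 0 :=
            Finset.sum_comm
        _ = ∑ g : V ≃ₗ[𝔽] V, (𝓕.filter (fun F => Submodule.map ((g : V ≃ₗ[𝔽] V) : V →ₗ[𝔽] V) F ∈ 𝓗)).card := by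
            exact Finset.sum_congr rfl fun g _ => (Finset.card_filter _ _).symm
        _ ≤ ∑ _g : V ≃ₗ[𝔽] V, α := Finset.sum_le_sum fun g _ => hgbound g
        _ = G * α := by rw [Finset.sum_const, smul_eq_mul, Finset.card_univ]
    calc ∑ F ∈ 𝓕, ((A F).card : ℚ) = ((∑ F ∈ 𝓕, (A F).card : ℕ) : ℚ) := by push_cast; rfl
      _ ≤ ((G * α : ℕ) : ℚ) := by exact_mod_cast hnat
      _ = (G : ℚ) * α := by push_cast; rfl
  calc ∑ F ∈ 𝓕, (({H | H ∈ 𝓗 ∧ finrank 𝔽 H = finrank 𝔽 F}.ncard : ℚ) /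
          ({W : Submodule 𝔽 V | finrank 𝔽 W = finrank 𝔽 F}.ncard : ℚ))
      = ∑ F ∈ 𝓕, ((A F).card : ℚ) / (G : ℚ) := by
        refine Finset.sum_congr rfl fun F _ => ?_
        rw [hncard_NH F, hncard_T F, hkey F]
    _ = (∑ F ∈ 𝓕, ((A F).card : ℚ)) / (G : ℚ) := by rw [Finset.sum_div]
    _ ≤ ((G : ℚ) * α) / (G : ℚ) :=
        div_le_div_of_nonneg_right hswap (by positivity)
    _ = α := by
        have hne : (G : ℚ) ≠ 0 := by exact_mod_cast hGpos.ne'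
        field_simp
end

section
/- Let V be an n-dimensional F_q-vector space and F a family of subspaces of V with {0} ∉ F and V ∉ F such that Σ_{F ∈ F} 1/[n choose dim F]_q ≤ k for a positive integer k. Then |F| ≤ Σ_q(n,k), the sum of the k largest Gaussian binomial coefficients [n choose i]_q. -/
/-- Top-k selection: a subset `T` of `D` of size `k` on which `N` dominates `D \ T`. -/
lemma aux_topk (N : ℕ → ℕ) : ∀ (k : ℕ) (D : Finset ℕ), k ≤ D.card →
    ∃ T ⊆ D, T.card = k ∧ ∀ i ∈ D, i ∉ T → ∀ j ∈ T, N i ≤ N j := by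
  intro k
  induction k with
  | zero => intro D _; exact ⟨∅, Finset.empty_subset _, rfl, by simp⟩
  | succ k ih =>
    intro D hD
    have hne : D.Nonempty := Finset.card_pos.mp (by omega)
    obtain ⟨j, hjD, hjmax⟩ := Finset.exists_max_image D N hne
    have hD' : k ≤ (D.erase j).card := by
      rw [Finset.card_erase_of_mem hjD]; omega
    obtain ⟨T', hT'sub, hT'card, hT'prop⟩ := ih (D.erase j) hD'
    have hjT' : j ∉ T' := fun h => (Finset.mem_erase.mp (hT'sub h)).1 rfl
    refine ⟨insert j T', ?_, ?_, ?_⟩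
    · intro x hx
      rcases Finset.mem_insert.mp hx with h | h
      · exact h ▸ hjD
      · exact Finset.mem_of_mem_erase (hT'sub h)
    · rw [Finset.card_insert_of_notMem hjT', hT'card]
    · intro i hiD hiT j' hj'
      rcases Finset.mem_insert.mp hj' with h | h
      · exact h ▸ hjmax i hiD
      · have hiD' : i ∈ D.erase j := Finset.mem_erase.mpr
          ⟨fun hij => hiT (hij ▸ Finset.mem_insert_self j T'), hiD⟩
        exact hT'prop i hiD' (fun h' => hiT (Finset.mem_insert_of_mem h')) j' h

/-- Main combinatorial lemma. -/
lemma aux_comb (k : ℕ) (D : Finset ℕ) (a N : ℕ → ℕ) (hk : 1 ≤ k)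
    (h1 : ∀ i ∈ D, 1 ≤ N i) (h2 : ∀ i ∈ D, a i ≤ N i)
    (hlym : ∑ i ∈ D, (a i : ℚ) / N i ≤ (k : ℚ)) (hcard : k ≤ D.card) :
    ∃ T ⊆ D, T.card = k ∧ ∑ i ∈ D, a i ≤ ∑ i ∈ T, N i := by
  obtain ⟨T, hTD, hTcard, hTtop⟩ := aux_topk N k D hcard
  refine ⟨T, hTD, hTcard, ?_⟩
  have hTne : T.Nonempty := Finset.card_pos.mp (by omega)
  obtain ⟨j0, hj0T, hj0min⟩ := Finset.exists_min_image T N hTne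
  set m : ℚ := (N j0 : ℚ) with hm
  have hNpos : ∀ i ∈ D, (0 : ℚ) < N i := fun i hi => by
    exact_mod_cast Nat.lt_of_lt_of_le Nat.zero_lt_one (h1 i hi)
  -- key rational inequality
  rw [← Nat.cast_le (α := ℚ)]
  push_cast
  have hsplit : ∑ i ∈ D \ T, (a i : ℚ) + ∑ i ∈ T, (a i : ℚ) = ∑ i ∈ D, (a i : ℚ) :=
    Finset.sum_sdiff hTD
  have hsplit2 : ∑ i ∈ D \ T, (a i : ℚ) / N i + ∑ i ∈ T, (a i : ℚ) / N i
      = ∑ i ∈ D, (a i : ℚ) / N i := Finset.sum_sdiff hTD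
  have step1 : ∑ i ∈ D \ T, (a i : ℚ) ≤ m * ∑ i ∈ D \ T, (a i : ℚ) / N i := by
    rw [Finset.mul_sum]
    apply Finset.sum_le_sum
    intro i hi
    have hiD : i ∈ D := (Finset.mem_sdiff.mp hi).1
    have hiT : i ∉ T := (Finset.mem_sdiff.mp hi).2
    have hNi : (0 : ℚ) < N i := hNpos i hiD
    have hle : (N i : ℚ) ≤ m := by
      rw [hm]; exact_mod_cast hTtop i hiD hiT j0 hj0T
    calc (a i : ℚ) = (a i : ℚ) / N i * N i := by field_simp
      _ ≤ (a i : ℚ) / N i * m := by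
          apply mul_le_mul_of_nonneg_left hle
          positivity
      _ = m * ((a i : ℚ) / N i) := mul_comm _ _
  have step2 : m * ∑ i ∈ D \ T, (a i : ℚ) / N i
      ≤ m * ((k : ℚ) - ∑ i ∈ T, (a i : ℚ) / N i) := by
    apply mul_le_mul_of_nonneg_left _ (by positivity)
    linarith [hlym, hsplit2]
  have hkT : (k : ℚ) = ∑ _i ∈ T, (1 : ℚ) := by
    rw [Finset.sum_const, hTcard]; simp
  have step3 : m * ((k : ℚ) - ∑ i ∈ T, (a i : ℚ) / N i)
      ≤ ∑ i ∈ T, ((N i : ℚ) - a i) := by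
    rw [hkT, ← Finset.sum_sub_distrib, Finset.mul_sum]
    apply Finset.sum_le_sum
    intro i hi
    have hiD : i ∈ D := hTD hi
    have hNi : (0 : ℚ) < N i := hNpos i hiD
    have hfrac : (a i : ℚ) / N i ≤ 1 := by
      rw [div_le_one hNi]; exact_mod_cast h2 i hiD
    have hmle : m ≤ (N i : ℚ) := by rw [hm]; exact_mod_cast hj0min i hi
    calc m * (1 - (a i : ℚ) / N i) ≤ (N i : ℚ) * (1 - (a i : ℚ) / N i) := by
          apply mul_le_mul_of_nonneg_right hmle
          linarith
      _ = (N i : ℚ) - a i := by field_simp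
  have : ∑ i ∈ D \ T, (a i : ℚ) ≤ ∑ i ∈ T, ((N i : ℚ) - a i) := by
    linarith
  rw [Finset.sum_sub_distrib] at this
  linarith [hsplit]

theorem stmt_19 {𝔽 V : Type*} [Field 𝔽] [Fintype 𝔽] [AddCommGroup V] [Module 𝔽 V]
    [FiniteDimensional 𝔽 V] (n k : ℕ) (hn : Module.finrank 𝔽 V = n) (hk : 1 ≤ k)
    (𝓕 : Finset (Submodule 𝔽 V)) (hbot : ⊥ ∉ 𝓕) (htop : ⊤ ∉ 𝓕)
    (hlym : ∑ F ∈ 𝓕,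
        (1 : ℚ) / ({W : Submodule 𝔽 V | Module.finrank 𝔽 W = Module.finrank 𝔽 F}.ncard : ℚ) ≤
        (k : ℚ))
    (Sk : ℕ)
    (hSk : IsGreatest {t | ∃ S : Finset ℕ, S ⊆ Finset.range (n + 1) ∧ S.card = k ∧
        t = ∑ i ∈ S, {W : Submodule 𝔽 V | Module.finrank 𝔽 W = i}.ncard} Sk) :
    𝓕.card ≤ Sk := by
  haveI : Finite V := Module.finite_of_finite 𝔽
  classical
  set N : ℕ → ℕ := fun i => {W : Submodule 𝔽 V | Module.finrank 𝔽 W = i}.ncard with hN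
  set dimf : Submodule 𝔽 V → ℕ := fun F => Module.finrank 𝔽 F with hdimf
  set D : Finset ℕ := 𝓕.image dimf with hD
  set a : ℕ → ℕ := fun i => (𝓕.filter (fun F => dimf F = i)).card with ha
  -- D ⊆ range (n+1)
  have hDsub : D ⊆ Finset.range (n + 1) := by
    intro i hi
    obtain ⟨F, hF, rfl⟩ := Finset.mem_image.mp hi
    simp only [Finset.mem_range, hdimf]
    have h := Submodule.finrank_le F
    omega
  -- card as fiberwise sum
  have hcard : 𝓕.card = ∑ i ∈ D, a i :=
    Finset.card_eq_sum_card_fiberwise (fun F hF => Finset.mem_image_of_mem dimf hF)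
  -- N i ≥ 1 and a i ≤ N i on D
  have h1 : ∀ i ∈ D, 1 ≤ N i := by
    intro i hi
    obtain ⟨F, hF, rfl⟩ := Finset.mem_image.mp hi
    have hne : {W : Submodule 𝔽 V | Module.finrank 𝔽 W = dimf F}.Nonempty := ⟨F, rfl⟩
    have := Set.ncard_pos (s := {W : Submodule 𝔽 V | Module.finrank 𝔽 W = dimf F})
      (Set.toFinite _)
    exact this.mpr hne
  have h2 : ∀ i ∈ D, a i ≤ N i := by
    intro i _
    have hsub : (↑(𝓕.filter (fun F => dimf F = i)) : Set (Submodule 𝔽 V))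
        ⊆ {W : Submodule 𝔽 V | Module.finrank 𝔽 W = i} := by
      intro W hW
      exact (Finset.mem_filter.mp hW).2
    have := Set.ncard_le_ncard hsub (Set.toFinite _)
    rwa [Set.ncard_coe_finset] at this
  -- LYM rewritten fiberwise
  have hlym' : ∑ i ∈ D, (a i : ℚ) / N i ≤ (k : ℚ) := by
    refine le_trans (le_of_eq ?_) hlym
    rw [← Finset.sum_fiberwise_of_maps_to (fun F hF => Finset.mem_image_of_mem dimf hF)
      (fun F => (1 : ℚ) / (N (dimf F) : ℚ))]
    apply Finset.sum_congr rfl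
    intro i _
    rw [Finset.sum_congr rfl (fun F hF => by
      rw [(Finset.mem_filter.mp hF).2]), Finset.sum_const, ha]
    simp [div_eq_mul_inv]
  -- k ≤ n + 1 from existence of some witness S
  obtain ⟨S0, hS0sub, hS0card, _⟩ := hSk.1
  have hkn : k ≤ n + 1 := by
    have := Finset.card_le_card hS0sub
    rw [hS0card, Finset.card_range] at this
    exact this
  by_cases hcase : k ≤ D.card
  · obtain ⟨T, hTD, hTcard, hTsum⟩ := aux_comb k D a N hk h1 h2 hlym' hcase
    have hTSk : ∑ i ∈ T, N i ≤ Sk :=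
      hSk.2 ⟨T, hTD.trans hDsub, hTcard, rfl⟩
    omega
  · -- D.card ≤ k : enlarge D to a k-set S inside range (n+1)
    obtain ⟨S, hDS, hSsub, hScard⟩ := Finset.exists_subsuperset_card_eq (n := k) hDsub
      (by omega) (by rw [Finset.card_range]; omega)
    have h3 : ∑ i ∈ D, a i ≤ ∑ i ∈ D, N i := Finset.sum_le_sum h2
    have h4 : ∑ i ∈ D, N i ≤ ∑ i ∈ S, N i :=
      Finset.sum_le_sum_of_subset hDS
    have hSSk : ∑ i ∈ S, N i ≤ Sk := hSk.2 ⟨S, hSsub, hScard, rfl⟩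
    omega
end
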